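/- (Jensen bound) Let C = ⊕_{t=1}^{g} ⟨θ_t⟩ □ C_t be a QC code in concatenated form with constituents ordered so that 0 < d(C_1) ≤ d(C_2) ≤ ⋯ ≤ d(C_g). Then the minimum Hamming distance of C satisfies d(C) ≥ min over 1 ≤ e ≤ g of d(C_e) · d(⟨θ_1⟩ ⊕ ⋯ ⊕ ⟨θ_e⟩). -/

import Mathlib

set_option maxHeartbeats 1000000

open Polynomial

/-- Hamming weight of a vector (number of nonzero coordinates). -/
noncomputable def wtv {n : ℕ} {α : Type*} [Zero α] (v : Fin n → α) : ℕ :=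
  (@Finset.filter _ (fun i => v i ≠ 0) (Classical.decPred _) Finset.univ).card

/-- Minimum Hamming distance of a (nonzero) code given as a set of vectors. -/
noncomputable def minDistSet {n : ℕ} {α : Type*} [Zero α] (S : Set (Fin n → α)) : ℕ :=
  sInf {w | ∃ v ∈ S, v ≠ 0 ∧ w = wtv v}

/-- The minimal cyclic code of length `m` over `F` with check polynomial `f`. -/
def minimalCyclicCode (F : Type*) [Field F] (m : ℕ) (f : Polynomial F) :
    Set (Fin m → F) :=
  {v | (X ^ m - C 1) ∣ (∑ k : Fin m, C (v k) * X ^ (k : ℕ)) * f}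

/-- The concatenated code `⊕_t ⟨θ_t⟩ □ C_t`. -/
def concatCode {F : Type*} [Field F] {m ℓ s : ℕ} {f : Fin s → Polynomial F}
    (ψ : ∀ t, AdjoinRoot (f t) →ₗ[F] (Fin m → F))
    (Cs : ∀ t, Submodule (AdjoinRoot (f t)) (Fin ℓ → AdjoinRoot (f t))) :
    Set (Fin m → Fin ℓ → F) :=
  {c | ∃ lam : ∀ t, Fin ℓ → AdjoinRoot (f t),
    (∀ t, lam t ∈ Cs t) ∧ ∀ k j, c k j = ∑ t, ψ t (lam t j) k}

/-- The cyclic code `⟨θ_1⟩ ⊕ ⋯ ⊕ ⟨θ_e⟩`: sums of elements of the minimal cyclic codes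
indexed by `t ≤ e`, via the identifications `ψ_t`. -/
def idemSumCode {F : Type*} [Field F] {m s : ℕ} {f : Fin s → Polynomial F}
    (ψ : ∀ t, AdjoinRoot (f t) →ₗ[F] (Fin m → F)) (e : Fin s) :
    Set (Fin m → F) :=
  {v | ∃ δ : ∀ t, AdjoinRoot (f t), (∀ t, ¬ t ≤ e → δ t = 0) ∧ v = ∑ t, ψ t (δ t)}

/-! ### Auxiliary material -/


noncomputable def polyOf {F : Type*} [Field F] {m : ℕ} : (Fin m → F) →ₗ[F] Polynomial F where
  toFun v := ∑ k : Fin m, C (v k) * X ^ (k : ℕ)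
  map_add' a b := by simp [C_add, add_mul, Finset.sum_add_distrib]
  map_smul' r v := by simp [C_mul, mul_assoc, Finset.mul_sum, smul_eq_C_mul]

lemma polyOf_apply {F : Type*} [Field F] {m : ℕ} (v : Fin m → F) :
    polyOf v = ∑ k : Fin m, C (v k) * X ^ (k : ℕ) := rfl

lemma polyOf_eq_zero {F : Type*} [Field F] {m : ℕ} {v : Fin m → F}
    (h : polyOf v = 0) : v = 0 := by
  funext k
  have hc : (polyOf v).coeff (k : ℕ) = v k := by
    rw [polyOf_apply, finset_sum_coeff, Finset.sum_eq_single k]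
    · simp
    · intro b _ hb
      simp only [coeff_C_mul, coeff_X_pow]
      rw [if_neg (fun h => hb (Fin.val_injective h.symm)), mul_zero]
    · simp
  rw [h] at hc
  simpa using hc.symm

lemma polyOf_degree_lt {F : Type*} [Field F] {m : ℕ} (v : Fin m → F) :
    (polyOf v).degree < (m : WithBot ℕ) := by
  rw [polyOf_apply]
  refine lt_of_le_of_lt (degree_sum_le _ _) ?_
  rw [Finset.sup_lt_iff (by exact_mod_cast WithBot.bot_lt_coe m)]
  intro k _
  exact lt_of_le_of_lt (degree_C_mul_X_pow_le _ _) (by exact_mod_cast k.isLt)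

/-- Linear independence of the minimal cyclic codes attached to distinct monic
irreducible factors of `X^m - 1`. -/
lemma indep_lemma {F : Type*} [Field F] {m s : ℕ} (hm : 0 < m) (f : Fin s → Polynomial F)
    (hirr : ∀ t, Irreducible (f t)) (hmonic : ∀ t, (f t).Monic)
    (hdist : ∀ t t', t ≠ t' → f t ≠ f t')
    (hprod : ∏ t, f t = X ^ m - Polynomial.C 1)
    (w : Fin s → (Fin m → F))
    (hdvd : ∀ t, (X ^ m - Polynomial.C 1) ∣ polyOf (w t) * f t)
    (hsum : ∑ t, w t = 0) : ∀ t, w t = 0 := by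
  intro t
  have hft0 : ∀ u, f u ≠ 0 := fun u => (hirr u).ne_zero
  have hcop : ∀ u u', u ≠ u' → IsCoprime (f u) (f u') := by
    intro u u' huu
    refine (hirr u).coprime_iff_not_dvd.2 (fun hdv => ?_)
    exact hdist u u' huu
      (eq_of_monic_of_associated (hmonic u) (hmonic u')
        ((hirr u).associated_of_dvd (hirr u') hdv))
  have hPsum : ∑ u, polyOf (w u) = 0 := by
    rw [← map_sum, hsum, map_zero]
  set Q : Polynomial F := ∏ u ∈ Finset.univ.erase t, f u with hQ
  have hprod_t : f t * Q = X ^ m - Polynomial.C 1 := by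
    rw [hQ, Finset.mul_prod_erase _ _ (Finset.mem_univ t), hprod]
  have hB : f t ∣ polyOf (w t) := by
    have heq : polyOf (w t) = -∑ u ∈ Finset.univ.erase t, polyOf (w u) := by
      have := Finset.add_sum_erase Finset.univ (fun u => polyOf (w u)) (Finset.mem_univ t)
      rw [hPsum] at this
      exact eq_neg_of_add_eq_zero_left this
    rw [heq]
    refine dvd_neg.mpr (Finset.dvd_sum fun u hu => ?_)
    have hut : u ≠ t := (Finset.mem_erase.mp hu).1
    have h1 : f t ∣ polyOf (w u) * f u :=
      dvd_trans (by rw [← hprod]; exact Finset.dvd_prod_of_mem f (Finset.mem_univ t)) (hdvd u)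
    exact (hcop t u hut.symm).dvd_of_dvd_mul_right h1
  have hA : Q ∣ polyOf (w t) := by
    have : f t * Q ∣ f t * polyOf (w t) := by
      rw [hprod_t, mul_comm]; exact hdvd t
    exact (mul_dvd_mul_iff_left (hft0 t)).mp this
  have hcopQ : IsCoprime (f t) Q :=
    IsCoprime.prod_right fun u hu => hcop t u (Finset.mem_erase.mp hu).1.symm
  have hfull : (X ^ m - Polynomial.C 1) ∣ polyOf (w t) := by
    rw [← hprod_t]; exact hcopQ.mul_dvd hB hA
  have hz : polyOf (w t) = 0 :=
    eq_zero_of_dvd_of_degree_lt hfull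
      (by rw [degree_X_pow_sub_C hm]; exact polyOf_degree_lt _)
  exact polyOf_eq_zero hz

theorem stmt7 (F : Type*) [Field F] [Fintype F] (m ℓ s : ℕ) (hm : 0 < m) [NeZero m]
    (hℓ : 0 < ℓ) (hmq : (m : F) ≠ 0)
    -- factorization of x^m − 1 into distinct monic irreducible polynomials
    (f : Fin s → Polynomial F)
    (hirr : ∀ t, Irreducible (f t)) (hmonic : ∀ t, (f t).Monic)
    (hdist : ∀ t t', t ≠ t' → f t ≠ f t')
    (hprod : ∏ t, f t = X ^ m - C 1)
    -- the identifications ψ_t of E_t with the minimal cyclic codes ⟨θ_t⟩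
    (ψ : ∀ t, AdjoinRoot (f t) →ₗ[F] (Fin m → F))
    (hinj : ∀ t, Function.Injective (ψ t))
    (hrange : ∀ t, (Set.range (ψ t)) = minimalCyclicCode F m (f t))
    (hshift : ∀ t (δ : AdjoinRoot (f t)) (k : Fin m),
      ψ t (AdjoinRoot.root (f t) * δ) k = ψ t δ (k - 1))
    -- the outer codes, ordered so that 0 < d(C_1) ≤ d(C_2) ≤ ⋯ ≤ d(C_g)
    (Cs : ∀ t, Submodule (AdjoinRoot (f t)) (Fin ℓ → AdjoinRoot (f t)))
    (hpos : ∀ t, 0 < minDistSet (Cs t : Set (Fin ℓ → AdjoinRoot (f t))))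
    (hmono : ∀ t t' : Fin s, t ≤ t' →
      minDistSet (Cs t : Set (Fin ℓ → AdjoinRoot (f t))) ≤
        minDistSet (Cs t' : Set (Fin ℓ → AdjoinRoot (f t')))) :
    -- Jensen bound: every nonzero codeword of the concatenated code C has weight at
    -- least min_{1 ≤ e ≤ g} d(C_e) · d(⟨θ_1⟩ ⊕ ⋯ ⊕ ⟨θ_e⟩)
    ∀ c ∈ concatCode ψ Cs, c ≠ 0 →
      ∃ e : Fin s,
        minDistSet (Cs e : Set (Fin ℓ → AdjoinRoot (f e))) * minDistSet (idemSumCode ψ e)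
          ≤ ∑ i : Fin m, wtv (c i) := by
  intro c hc hc0
  obtain ⟨lam, hlamC, hcrep⟩ := hc
  -- the independence property of the ψ's
  have hindep : ∀ δ : ∀ t, AdjoinRoot (f t), ∑ t, ψ t (δ t) = 0 → ∀ t, δ t = 0 := by
    intro δ hs t
    have h0 : ψ t (δ t) = 0 := by
      refine indep_lemma hm f hirr hmonic hdist hprod (fun u => ψ u (δ u))
        (fun u => ?_) hs t
      have hmem : ψ u (δ u) ∈ minimalCyclicCode F m (f u) := by
        rw [← hrange u]; exact ⟨δ u, rfl⟩
      exact hmem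
    exact hinj t (by rw [h0, map_zero])
  -- some constituent is nonzero
  have hex : ∃ t, lam t ≠ 0 := by
    by_contra h
    push_neg at h
    apply hc0
    funext k j
    rw [hcrep k j]
    simp [h]
  set T : Finset (Fin s) := Finset.univ.filter (fun t => lam t ≠ 0) with hT
  have hTne : T.Nonempty := by
    obtain ⟨t, ht⟩ := hex
    exact ⟨t, by simp [hT, ht]⟩
  set e := T.max' hTne with he
  have hle : lam e ≠ 0 := (Finset.mem_filter.mp (T.max'_mem hTne)).2
  have hzero : ∀ t, ¬ t ≤ e → lam t = 0 := by
    intro t ht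
    by_contra h
    exact ht (T.le_max' t (by simp [hT, h]))
  refine ⟨e, ?_⟩
  set D := minDistSet (idemSumCode ψ e) with hD
  -- nonzero columns of the codeword lie in the idempotent-sum cyclic code
  have hcol : ∀ j : Fin ℓ, lam e j ≠ 0 → D ≤ wtv (fun k => c k j) := by
    intro j hj
    have hmem : (fun k => c k j) ∈ idemSumCode ψ e := by
      refine ⟨fun t => lam t j, fun t ht => by show lam t j = 0; rw [hzero t ht]; rfl, ?_⟩
      funext k
      rw [hcrep k j, Finset.sum_apply]
    have hne : (fun k => c k j) ≠ 0 := by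
      intro h0
      apply hj
      refine hindep (fun t => lam t j) ?_ e
      funext k
      rw [Finset.sum_apply]
      have := congrFun h0 k
      simp only [Pi.zero_apply] at this ⊢
      rw [← hcrep k j]
      exact this
    exact Nat.sInf_le ⟨_, hmem, hne, rfl⟩
  -- the outer codeword has weight at least d(C_e)
  have houter : minDistSet (Cs e : Set (Fin ℓ → AdjoinRoot (f e))) ≤ wtv (lam e) :=
    Nat.sInf_le ⟨lam e, hlamC e, hle, rfl⟩
  -- double counting
  have hcount : ∑ i : Fin m, wtv (c i) = ∑ j : Fin ℓ, wtv (fun k => c k j) := by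
    simp only [wtv, Finset.card_filter]
    rw [Finset.sum_comm]
  set J : Finset (Fin ℓ) := Finset.univ.filter (fun j => lam e j ≠ 0) with hJ
  have hJcard : wtv (lam e) = J.card := by
    simp only [wtv, hJ]
    exact congrArg Finset.card (Finset.filter_congr_decidable _ _ _)
  calc minDistSet (Cs e : Set (Fin ℓ → AdjoinRoot (f e))) * D
      ≤ wtv (lam e) * D := Nat.mul_le_mul_right _ houter
    _ = ∑ j ∈ J, D := by rw [hJcard, Finset.sum_const, smul_eq_mul, mul_comm]
    _ ≤ ∑ j ∈ J, wtv (fun k => c k j) := by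
        refine Finset.sum_le_sum fun j hjJ => ?_
        rw [hJ] at hjJ
        exact hcol j (Finset.mem_filter.mp hjJ).2
    _ ≤ ∑ j : Fin ℓ, wtv (fun k => c k j) :=
        Finset.sum_le_sum_of_subset (Finset.subset_univ _)
    _ = ∑ i : Fin m, wtv (c i) := hcount.symm
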